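/- Let V₊, V₋ ∈ ℂ and α ∈ ℂ with |Re(V₊ − V₋)·Re α + Im(V₊ − V₋)·Im α| < −|α|²·Re α (in particular α ≠ 0 and Re α < 0). Set z(α) := (V₊ + V₋)/2 − (V₊ − V₋)²/(4α²) − α²/4 and define u_α : ℝ → ℂ by u_α(x) := exp((α/2 + (V₊ − V₋)/(2α))·x) for x ≥ 0 and u_α(x) := exp(−(α/2 − (V₊ − V₋)/(2α))·x) for x ≤ 0. Then: ∫_ℝ |u_α(x)|² dx < ∞; u_α is continuous with u_α(0) = 1; u_α is differentiable on (−∞,0) and on (0,+∞), its one-sided derivatives at 0 exist and satisfy u_α'(0⁺) − u_α'(0⁻) = α·u_α(0); and −u_α''(x) + V(x)·u_α(x) = z(α)·u_α(x) for every x ≠ 0. (Thus z(α) is an eigenvalue, with eigenfunction u_α, of the complex point interaction operator 𝓛_α = −d²/dx² + V + α·δ₀ whenever α lies in the region Ω.) -/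

import Mathlib

open MeasureTheory

private lemma hasDerivAt_cexp_real' (β : ℂ) (x : ℝ) :
    HasDerivAt (fun t : ℝ => Complex.exp (β * t)) (β * Complex.exp (β * x)) x := by
  have h1 : HasDerivAt (fun t : ℝ => β * (t : ℂ)) β x := by
    simpa using ((hasDerivAt_id x).ofReal_comp.const_mul β)
  simpa [mul_comm] using h1.cexp

/-- The eigenfunction `u_α` of the complex point interaction operator `𝓛_α`. -/
noncomputable def ualpha (Vp Vm α : ℂ) (x : ℝ) : ℂ :=
  if 0 ≤ x then Complex.exp ((α / 2 + (Vp - Vm) / (2 * α)) * (x : ℂ))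
  else Complex.exp (-(α / 2 - (Vp - Vm) / (2 * α)) * (x : ℂ))

/-- If `α ∈ Ω`, i.e. `|⟨V₊ − V₋, α⟩_{ℝ²}| < −|α|²·Re α` (so `α ≠ 0`, `Re α < 0`), then
`u_α` is square-integrable, continuous with `u_α(0) = 1`, differentiable away from `0`
with one-sided derivatives at `0` satisfying the jump condition
`u_α'(0⁺) − u_α'(0⁻) = α·u_α(0)`, and solves `−u_α'' + V·u_α = z(α)·u_α` away from `0`;
hence `z(α)` is an eigenvalue of `𝓛_α` with eigenfunction `u_α`. -/
theorem stmt16 (Vp Vm α : ℂ)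
    (hΩ : |(Vp - Vm).re * α.re + (Vp - Vm).im * α.im| < -(‖α‖ ^ 2 * α.re)) :
    α ≠ 0 ∧ α.re < 0 ∧
    Integrable (fun x : ℝ => ‖ualpha Vp Vm α x‖ ^ 2) ∧
    Continuous (ualpha Vp Vm α) ∧ ualpha Vp Vm α 0 = 1 ∧
    ∃ du ddu : ℝ → ℂ, ∃ dplus dminus : ℂ,
      (∀ x : ℝ, x ≠ 0 → HasDerivAt (ualpha Vp Vm α) (du x) x) ∧
      HasDerivWithinAt (ualpha Vp Vm α) dplus (Set.Ici 0) 0 ∧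
      HasDerivWithinAt (ualpha Vp Vm α) dminus (Set.Iic 0) 0 ∧
      dplus - dminus = α * ualpha Vp Vm α 0 ∧
      (∀ x : ℝ, x ≠ 0 → HasDerivAt du (ddu x) x) ∧
      (∀ x : ℝ, x ≠ 0 →
        -ddu x + (if 0 ≤ x then Vp else Vm) * ualpha Vp Vm α x
          = ((Vp + Vm) / 2 - (Vp - Vm) ^ 2 / (4 * α ^ 2) - α ^ 2 / 4)
              * ualpha Vp Vm α x) := by
  rw [Complex.sq_norm, abs_lt] at hΩ
  obtain ⟨h1, h2⟩ := hΩ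
  have hN : 0 ≤ Complex.normSq α := Complex.normSq_nonneg α
  have hre : α.re < 0 := by
    by_contra h; push_neg at h
    nlinarith [Complex.normSq_apply α]
  have hα0 : α ≠ 0 := by intro h; rw [h] at hre; simp at hre
  have hNpos : 0 < Complex.normSq α := by rwa [Complex.normSq_pos]
  have hNne : Complex.normSq α ≠ 0 := ne_of_gt hNpos
  have e1 : ((Vp - Vm) / (2 * α)).re
      = ((Vp - Vm).re * α.re + (Vp - Vm).im * α.im) / (2 * Complex.normSq α) := by
    have hNne' : α.re * α.re + α.im * α.im ≠ 0 := by
      rwa [Complex.normSq_apply] at hNne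
    have h4 : 2 * α.re * (2 * α.re) + 2 * α.im * (2 * α.im) ≠ 0 := by
      intro h; apply hNne'; nlinarith
    rw [Complex.div_re]
    simp only [Complex.mul_re, Complex.mul_im, Complex.re_ofNat, Complex.im_ofNat,
      Complex.normSq_apply, zero_mul, mul_zero, sub_zero, add_zero]
    rw [div_add_div _ _ h4 h4, div_eq_div_iff (by intro h; apply hNne'; nlinarith)
      (by intro h; apply hNne'; nlinarith)]
    ring
  have e0 : (α / 2).re = α.re / 2 := by
    simp [Complex.div_ofNat_re]
  have ha : (α / 2 + (Vp - Vm) / (2 * α)).re < 0 := by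
    rw [Complex.add_re, e0, e1]
    have : α.re / 2 + ((Vp - Vm).re * α.re + (Vp - Vm).im * α.im) / (2 * Complex.normSq α)
        = (Complex.normSq α * α.re + ((Vp - Vm).re * α.re + (Vp - Vm).im * α.im))
          / (2 * Complex.normSq α) := by field_simp
    rw [this]
    apply div_neg_of_neg_of_pos _ (by linarith)
    linarith
  have hb : 0 < (-(α / 2 - (Vp - Vm) / (2 * α))).re := by
    rw [Complex.neg_re, Complex.sub_re, e0, e1]
    have : -(α.re / 2 - ((Vp - Vm).re * α.re + (Vp - Vm).im * α.im) / (2 * Complex.normSq α))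
        = (-(Complex.normSq α * α.re) + ((Vp - Vm).re * α.re + (Vp - Vm).im * α.im))
          / (2 * Complex.normSq α) := by field_simp; ring
    rw [this]
    apply div_pos _ (by linarith)
    linarith
  refine ⟨hα0, hre, ?_⟩
  set Bp : ℂ := α / 2 + (Vp - Vm) / (2 * α) with hBp
  set Bm : ℂ := -(α / 2 - (Vp - Vm) / (2 * α)) with hBm
  have hu : ∀ x : ℝ, ualpha Vp Vm α x
      = if 0 ≤ x then Complex.exp (Bp * x) else Complex.exp (Bm * x) := fun x => rfl
  have hu0 : ualpha Vp Vm α 0 = 1 := by simp [hu 0]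
  refine ⟨?_, ?_, hu0, ?_⟩
  · -- integrability
    have hnorm : (fun x : ℝ => ‖ualpha Vp Vm α x‖ ^ 2)
        = fun x : ℝ => if 0 ≤ x then Real.exp (2 * Bp.re * x) else Real.exp (2 * Bm.re * x) := by
      funext x
      rw [hu x]
      by_cases hx : 0 ≤ x
      · rw [if_pos hx, if_pos hx, Complex.norm_exp, sq, ← Real.exp_add]
        congr 1
        simp [Complex.mul_re]
        ring
      · rw [if_neg hx, if_neg hx, Complex.norm_exp, sq, ← Real.exp_add]
        congr 1
        simp [Complex.mul_re]
        ring
    rw [hnorm, ← integrableOn_univ, ← Set.Iio_union_Ici (a := (0:ℝ)), integrableOn_union,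
      integrableOn_Ici_iff_integrableOn_Ioi]
    constructor
    · have h := exp_neg_integrableOn_Ioi 0 (show (0:ℝ) < 2 * Bm.re by linarith)
      have h2 := (MeasurePreserving.integrableOn_comp_preimage
        (Measure.measurePreserving_neg (volume : Measure ℝ))
        (Homeomorph.neg ℝ).measurableEmbedding).2 h
      have h3 : IntegrableOn (fun x : ℝ => Real.exp (2 * Bm.re * x)) (Set.Iio 0) := by
        simpa [Function.comp_def, neg_mul, mul_neg] using h2
      refine h3.congr_fun (fun x hx => ?_) measurableSet_Iio
      simp [Set.mem_Iio.1 hx, not_le.2 (Set.mem_Iio.1 hx)]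
    · have h := exp_neg_integrableOn_Ioi 0 (show (0:ℝ) < -(2 * Bp.re) by linarith)
      have h3 : IntegrableOn (fun x : ℝ => Real.exp (2 * Bp.re * x)) (Set.Ioi 0) := by
        simpa using h
      refine h3.congr_fun (fun x hx => ?_) measurableSet_Ioi
      simp [le_of_lt (Set.mem_Ioi.1 hx)]
  · -- continuity
    have : ualpha Vp Vm α = fun x : ℝ =>
        if (0:ℝ) ≤ x then Complex.exp (Bp * x) else Complex.exp (Bm * x) := funext hu
    rw [this]
    apply Continuous.if_le
    · exact Complex.continuous_exp.comp (continuous_const.mul Complex.continuous_ofReal)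
    · exact Complex.continuous_exp.comp (continuous_const.mul Complex.continuous_ofReal)
    · exact continuous_const
    · exact continuous_id
    · intro x hx; simp [← hx]
  · -- derivatives
    refine ⟨fun x => if 0 ≤ x then Bp * Complex.exp (Bp * x) else Bm * Complex.exp (Bm * x),
      fun x => if 0 ≤ x then Bp ^ 2 * Complex.exp (Bp * x) else Bm ^ 2 * Complex.exp (Bm * x),
      Bp, Bm, ?_, ?_, ?_, ?_, ?_, ?_⟩
    · intro x hx
      rcases lt_or_gt_of_ne hx with hneg | hpos
      · have hev : ualpha Vp Vm α =ᶠ[nhds x] fun t : ℝ => Complex.exp (Bm * t) := by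
          filter_upwards [Iio_mem_nhds hneg] with y hy
          simp [hu y, not_le.2 (Set.mem_Iio.1 hy)]
        beta_reduce
        rw [if_neg (not_le.2 hneg)]
        exact (hasDerivAt_cexp_real' Bm x).congr_of_eventuallyEq hev
      · have hev : ualpha Vp Vm α =ᶠ[nhds x] fun t : ℝ => Complex.exp (Bp * t) := by
          filter_upwards [Ioi_mem_nhds hpos] with y hy
          simp [hu y, le_of_lt (Set.mem_Ioi.1 hy)]
        beta_reduce
        rw [if_pos hpos.le]
        exact (hasDerivAt_cexp_real' Bp x).congr_of_eventuallyEq hev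
    · have h := (hasDerivAt_cexp_real' Bp 0).hasDerivWithinAt (s := Set.Ici 0)
      have h2 : HasDerivWithinAt (ualpha Vp Vm α) (Bp * Complex.exp (Bp * (0:ℝ)))
          (Set.Ici 0) 0 := by
        refine h.congr (fun y hy => ?_) ?_
        · simp [hu y, Set.mem_Ici.1 hy]
        · simp [hu 0]
      simpa using h2
    · have h := (hasDerivAt_cexp_real' Bm 0).hasDerivWithinAt (s := Set.Iic 0)
      have h2 : HasDerivWithinAt (ualpha Vp Vm α) (Bm * Complex.exp (Bm * (0:ℝ)))
          (Set.Iic 0) 0 := by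
        refine h.congr (fun y hy => ?_) ?_
        · rcases eq_or_lt_of_le (Set.mem_Iic.1 hy) with h0 | h0
          · rw [h0, hu0]; simp
          · simp [hu y, not_le.2 h0]
        · simp [hu 0]
      simpa using h2
    · rw [hu0, hBp, hBm]; ring
    · intro x hx
      rcases lt_or_gt_of_ne hx with hneg | hpos
      · have hev : (fun x : ℝ => if 0 ≤ x then Bp * Complex.exp (Bp * x)
            else Bm * Complex.exp (Bm * x)) =ᶠ[nhds x]
            fun t : ℝ => Bm * Complex.exp (Bm * t) := by
          filter_upwards [Iio_mem_nhds hneg] with y hy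
          simp [not_le.2 (Set.mem_Iio.1 hy)]
        beta_reduce
        rw [if_neg (not_le.2 hneg)]
        have := ((hasDerivAt_cexp_real' Bm x).const_mul Bm).congr_of_eventuallyEq hev
        convert this using 1
        · rfl
        ring
      · have hev : (fun x : ℝ => if 0 ≤ x then Bp * Complex.exp (Bp * x)
            else Bm * Complex.exp (Bm * x)) =ᶠ[nhds x]
            fun t : ℝ => Bp * Complex.exp (Bp * t) := by
          filter_upwards [Ioi_mem_nhds hpos] with y hy
          simp [le_of_lt (Set.mem_Ioi.1 hy)]
        beta_reduce
        rw [if_pos hpos.le]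
        have := ((hasDerivAt_cexp_real' Bp x).const_mul Bp).congr_of_eventuallyEq hev
        convert this using 1
        · rfl
        ring
    · intro x hx
      beta_reduce
      by_cases hx0 : 0 ≤ x
      · rw [if_pos hx0, if_pos hx0, hu x, if_pos hx0]
        have hz : -Bp ^ 2 + Vp
            = (Vp + Vm) / 2 - (Vp - Vm) ^ 2 / (4 * α ^ 2) - α ^ 2 / 4 := by
          rw [hBp]; field_simp [hα0]; ring
        linear_combination Complex.exp (Bp * x) * hz
      · rw [if_neg hx0, if_neg hx0, hu x, if_neg hx0]
        have hz : -Bm ^ 2 + Vm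
            = (Vp + Vm) / 2 - (Vp - Vm) ^ 2 / (4 * α ^ 2) - α ^ 2 / 4 := by
          rw [hBm]; field_simp [hα0]; ring
        linear_combination Complex.exp (Bm * x) * hz
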